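/- For all natural numbers s ≥ 2 and t ≥ 2, one has (s+t choose s)⁻¹ ≤ e^{9/8} · √t · (1 + (s choose 2)·(t/s)²)⁻¹. -/
import Mathlib


theorem stmt11 (s t : ℕ) (hs : 2 ≤ s) (ht : 2 ≤ t) :
    (((s + t).choose s : ℝ))⁻¹ ≤
      Real.exp (9 / 8) * Real.sqrt t * (1 + (s.choose 2 : ℝ) * ((t : ℝ) / s) ^ 2)⁻¹ := by
  set K : ℝ := Real.exp (9 / 8) * Real.sqrt t with hKdef
  set C : ℝ := (s.choose 2 : ℝ) * ((t : ℝ) / s) ^ 2 with hCdef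
  have hs0 : (0 : ℝ) < s := by exact_mod_cast Nat.lt_of_lt_of_le (by norm_num) hs
  have hs2 : (2 : ℝ) ≤ s := by exact_mod_cast hs
  have ht2 : (2 : ℝ) ≤ t := by exact_mod_cast ht
  have hK2 : (2 : ℝ) ≤ K := by
    have h1 : (2 : ℝ) ≤ Real.exp (9 / 8) := by
      have := Real.add_one_le_exp (1 : ℝ)
      have h2 : Real.exp 1 ≤ Real.exp (9 / 8) := Real.exp_le_exp.mpr (by norm_num)
      linarith
    have h3 : (1 : ℝ) ≤ Real.sqrt t := by
      rw [show (1 : ℝ) = Real.sqrt 1 by simp]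
      exact Real.sqrt_le_sqrt (by linarith)
    calc (2 : ℝ) = 2 * 1 := by ring
      _ ≤ Real.exp (9 / 8) * Real.sqrt t := by
          apply mul_le_mul h1 h3 (by norm_num) (le_of_lt (Real.exp_pos _))
  have hK0 : (0 : ℝ) < K := by linarith
  -- bound C
  have hC0 : (0 : ℝ) ≤ C := by positivity
  have hC : C ≤ (t : ℝ) ^ 2 / 2 := by
    rw [hCdef, Nat.cast_choose_two, div_pow]
    rw [div_mul_div_comm, div_le_div_iff₀ (by positivity) (by norm_num)]
    have hss : (s : ℝ) * ((s : ℝ) - 1) ≤ (s : ℝ) ^ 2 := by nlinarith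
    nlinarith [sq_nonneg (t : ℝ), sq_nonneg (s : ℝ), mul_nonneg (sq_nonneg (t : ℝ)) (sq_nonneg (s : ℝ))]
  -- bound choose from below
  have ha : ((t : ℝ) + 2) * ((t : ℝ) + 1) / 2 ≤ ((s + t).choose s : ℝ) := by
    have h1 : (t + 2).choose 2 ≤ (s + t).choose s := by
      rw [Nat.choose_symm_add,
        Nat.choose_symm_of_eq_add (show t + 2 = 2 + t by omega)]
      exact Nat.choose_le_choose t (by omega)
    have h2 : ((t + 2).choose 2 : ℝ) = ((t : ℝ) + 2) * ((t : ℝ) + 1) / 2 := by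
      rw [Nat.cast_choose_two]; push_cast; ring
    calc ((t : ℝ) + 2) * ((t : ℝ) + 1) / 2 = ((t + 2).choose 2 : ℝ) := h2.symm
      _ ≤ ((s + t).choose s : ℝ) := by exact_mod_cast h1
  have ha0 : (0 : ℝ) < ((s + t).choose s : ℝ) := by
    have : 0 < (s + t).choose s := Nat.choose_pos (by omega)
    exact_mod_cast this
  have key : (1 + C) / K ≤ ((s + t).choose s : ℝ) := by
    rw [div_le_iff₀ hK0]
    calc 1 + C ≤ 1 + (t : ℝ) ^ 2 / 2 := by linarith
      _ ≤ ((t : ℝ) + 2) * ((t : ℝ) + 1) / 2 * 2 := by nlinarith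
      _ ≤ ((s + t).choose s : ℝ) * K := by
          apply mul_le_mul ha hK2 (by norm_num) (le_of_lt ha0)
  calc (((s + t).choose s : ℝ))⁻¹ ≤ ((1 + C) / K)⁻¹ := by
        apply inv_anti₀ (div_pos (by linarith) hK0) key
    _ = K * (1 + C)⁻¹ := by rw [inv_div, div_eq_mul_inv]
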